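/- Substituting $k(t) = \ell(t)^2$ transforms the functional $E(k) = \int_0^1 \frac{|k'(t)|^2}{k(t)}\,dt$ into $E = 4\int_0^1 |\ell'(t)|^2\,dt$; consequently, among curves with $k(0) = k_0 > 0$ and $k(1) = k_1 > 0$, the minimum of $E$ is $4(\sqrt{k_0} - \sqrt{k_1})^2$. -/

import Mathlib

open intervalIntegral

private lemma cs_onedim (g : ℝ → ℝ) (hg : IntervalIntegrable g MeasureTheory.volume 0 1)
    (hg2 : IntervalIntegrable (fun t => (g t)^2) MeasureTheory.volume 0 1) :
    (∫ t in (0:ℝ)..1, g t)^2 ≤ ∫ t in (0:ℝ)..1, (g t)^2 := by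
  set I := ∫ t in (0:ℝ)..1, g t with hI
  have h0 : 0 ≤ ∫ t in (0:ℝ)..1, (g t - I)^2 :=
    intervalIntegral.integral_nonneg (by norm_num) fun t _ => sq_nonneg _
  have hexp : ∫ t in (0:ℝ)..1, (g t - I)^2 = (∫ t in (0:ℝ)..1, (g t)^2) - I^2 := by
    have hfun : (fun t => (g t - I)^2) = fun t => ((g t)^2 - (2*I)*g t) + I^2 := by
      funext t; ring
    rw [hfun, intervalIntegral.integral_add (hg2.sub (hg.const_mul _)) intervalIntegrable_const,
        intervalIntegral.integral_sub hg2 (hg.const_mul _), intervalIntegral.integral_const_mul,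
        intervalIntegral.integral_const]
    simp
    ring
  linarith

theorem reaction_cost (k0 k1 : ℝ) (hk0 : 0 < k0) (hk1 : 0 < k1) :
    (∀ ℓ : ℝ → ℝ, ContDiff ℝ 1 ℓ → (∀ t ∈ Set.Icc (0:ℝ) 1, 0 < ℓ t) →
      (∫ t in (0:ℝ)..1, (deriv (fun s => (ℓ s)^2) t)^2 / (ℓ t)^2)
        = 4 * ∫ t in (0:ℝ)..1, (deriv ℓ t)^2) ∧
    (∀ k : ℝ → ℝ, ContDiff ℝ 1 k → (∀ t ∈ Set.Icc (0:ℝ) 1, 0 < k t) →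
      k 0 = k0 → k 1 = k1 →
      4 * (Real.sqrt k0 - Real.sqrt k1)^2 ≤ ∫ t in (0:ℝ)..1, (deriv k t)^2 / k t) ∧
    (∃ k : ℝ → ℝ, ContDiff ℝ 1 k ∧ (∀ t ∈ Set.Icc (0:ℝ) 1, 0 < k t) ∧
      k 0 = k0 ∧ k 1 = k1 ∧
      (∫ t in (0:ℝ)..1, (deriv k t)^2 / k t) = 4 * (Real.sqrt k0 - Real.sqrt k1)^2) := by
  refine ⟨?_, ?_, ?_⟩
  · -- Part 1
    intro ℓ hℓ hpos
    rw [← intervalIntegral.integral_const_mul]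
    apply intervalIntegral.integral_congr
    intro t ht
    rw [Set.uIcc_of_le (by norm_num : (0:ℝ) ≤ 1)] at ht
    have hne : ℓ t ≠ 0 := (hpos t ht).ne'
    have hd : deriv (fun s => (ℓ s)^2) t = 2 * ℓ t * deriv ℓ t := by
      have h := ((hℓ.differentiable one_ne_zero t).hasDerivAt).fun_pow 2
      simpa [mul_comm] using h.deriv
    dsimp only
    rw [hd]
    field_simp
    ring
  · -- Part 2
    intro k hk hpos h0 h1
    set g : ℝ → ℝ := fun t => deriv k t / (2 * Real.sqrt (k t)) with hg
    have hkc : Continuous k := hk.continuous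
    have hdc : Continuous (deriv k) := hk.continuous_deriv le_rfl
    have hsne : ∀ t ∈ Set.Icc (0:ℝ) 1, Real.sqrt (k t) ≠ 0 := fun t ht =>
      (Real.sqrt_pos.2 (hpos t ht)).ne'
    have hgcont : ContinuousOn g (Set.Icc (0:ℝ) 1) := by
      apply hdc.continuousOn.div
      · exact (continuous_const.mul (Real.continuous_sqrt.comp hkc)).continuousOn
      · intro t ht
        simpa using hsne t ht
    have huIcc : Set.uIcc (0:ℝ) 1 = Set.Icc 0 1 := Set.uIcc_of_le (by norm_num)
    have hgi : IntervalIntegrable g MeasureTheory.volume 0 1 :=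
      (hgcont.mono (by rw [huIcc])).intervalIntegrable
    have hg2i : IntervalIntegrable (fun t => (g t)^2) MeasureTheory.volume 0 1 :=
      ((hgcont.pow 2).mono (by rw [huIcc])).intervalIntegrable
    have hftc : ∫ t in (0:ℝ)..1, g t = Real.sqrt k1 - Real.sqrt k0 := by
      have : ∫ t in (0:ℝ)..1, g t = (fun t => Real.sqrt (k t)) 1 - (fun t => Real.sqrt (k t)) 0 := by
        apply intervalIntegral.integral_eq_sub_of_hasDerivAt (f := fun t => Real.sqrt (k t))
        · intro t ht
          rw [huIcc] at ht
          have hder := (Real.hasDerivAt_sqrt (hpos t ht).ne').comp t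
            (hk.differentiable one_ne_zero t).hasDerivAt
          have : (1 / (2 * Real.sqrt (k t))) * deriv k t = g t := by
            simp [hg]; ring
          rw [← this]
          exact hder
        · exact hgi
      simp only [h0, h1] at this
      exact this
    have hcs := cs_onedim g hgi hg2i
    have heq : ∫ t in (0:ℝ)..1, (deriv k t)^2 / k t = 4 * ∫ t in (0:ℝ)..1, (g t)^2 := by
      rw [← intervalIntegral.integral_const_mul]
      apply intervalIntegral.integral_congr
      intro t ht
      rw [huIcc] at ht
      have hkne : k t ≠ 0 := (hpos t ht).ne'
      have hsq : Real.sqrt (k t) ^ 2 = k t := Real.sq_sqrt (hpos t ht).le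
      have hsn := hsne t ht
      simp only [hg]
      field_simp
      rw [hsq]
      ring
    rw [heq, hftc] at *
    nlinarith [hcs]
  · -- Part 3
    set c : ℝ := Real.sqrt k1 - Real.sqrt k0 with hc
    set ℓ : ℝ → ℝ := fun t => Real.sqrt k0 + t * c with hℓ
    have hℓd : ∀ t, HasDerivAt ℓ c t := by
      intro t
      simpa [hℓ] using ((hasDerivAt_id t).mul_const c).const_add (Real.sqrt k0)
    have hℓpos : ∀ t ∈ Set.Icc (0:ℝ) 1, 0 < ℓ t := by
      intro t ht
      have h0 := Real.sqrt_pos.2 hk0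
      have h1 := Real.sqrt_pos.2 hk1
      simp only [hℓ, hc]
      rcases le_total (Real.sqrt k0) (Real.sqrt k1) with h|h
      · nlinarith [mul_nonneg ht.1 (sub_nonneg.2 h)]
      · nlinarith [mul_nonneg (sub_nonneg.2 ht.2) (sub_nonneg.2 h)]
    refine ⟨fun t => (ℓ t)^2, ?_, ?_, ?_, ?_, ?_⟩
    · exact ((contDiff_const.add (contDiff_id.mul contDiff_const)).pow 2)
    · intro t ht; exact pow_pos (hℓpos t ht) 2
    · simp [hℓ, Real.sq_sqrt hk0.le]
    · simp only [hℓ, hc]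
      rw [one_mul]
      ring_nf
      rw [Real.sq_sqrt hk1.le]
    · have hd : ∀ t, deriv (fun t => (ℓ t)^2) t = 2 * ℓ t * c := by
        intro t
        have := ((hℓd t).fun_pow 2).deriv
        simpa [mul_comm] using this
      have : ∫ t in (0:ℝ)..1, (deriv (fun t => (ℓ t)^2) t)^2 / (ℓ t)^2
          = ∫ t in (0:ℝ)..1, (4 * c^2 : ℝ) := by
        apply intervalIntegral.integral_congr
        intro t ht
        rw [Set.uIcc_of_le (by norm_num : (0:ℝ) ≤ 1)] at ht
        have hne : ℓ t ≠ 0 := (hℓpos t ht).ne'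
        dsimp only
        rw [hd t]
        field_simp
        ring
      rw [this, intervalIntegral.integral_const]
      simp [hc]
      ring
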